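/- Consider the stochastic discrete-time system with measurable safe set X ⊆ ℝⁿ and horizon N ∈ ℕ, and let X̃ ⊆ ℝⁿ be a measurable set containing X and all one-step reachable states from X. Suppose v : ℝⁿ → ℝ is measurable, the map θ ↦ v(f(x,θ)) is P-integrable for every x ∈ X, and there are constants M ∈ ℝ, α > 1 and β > 1 − α such that: (i) v(x) ≤ M for all x ∈ X̃; (ii) β + α·v(x) ≤ ∫_Θ v(f(x,θ)) dP(θ) for all x ∈ X; (iii) v(x) ≤ 1 for all x ∈ X̃ ∖ X. Then for every x₀ ∈ X, the finite-time safety probability satisfies P^∞({π : φ_π^{x₀}(k) ∈ X for all k ∈ {0,1,…,N}}) ≤ 1 − ((α^{N+1}·v(x₀) − M)(α − 1) + β(α^{N+1} − 1)) / ((α + β − 1)(α^{N+1} − 1)). -/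

import Mathlib

open MeasureTheory ProbabilityTheory

/-- Trajectory of the stochastic discrete-time system `x(l+1) = f(x(l), θ(l))`. -/
def traj {n : ℕ} {Θ : Type*} (f : (Fin n → ℝ) → Θ → (Fin n → ℝ))
    (x₀ : Fin n → ℝ) (π : ℕ → Θ) : ℕ → (Fin n → ℝ)
  | 0 => x₀
  | k + 1 => f (traj f x₀ π k) (π k)

lemma cylinder_integral {Θ : Type*} [MeasurableSpace Θ]
    (P : Measure Θ) [IsProbabilityMeasure P]
    (Pinf : Measure (ℕ → Θ)) [IsProbabilityMeasure Pinf]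
    (h_indep : iIndepFun (m := fun _ : ℕ => ‹MeasurableSpace Θ›) (fun i (π : ℕ → Θ) => π i) Pinf)
    (h_law : ∀ i : ℕ, Pinf.map (fun π : ℕ → Θ => π i) = P)
    (k : ℕ) (Φ : (Fin k → Θ) × Θ → ℝ) (hΦ : Measurable Φ)
    (C : ℝ) (hC : ∀ z, |Φ z| ≤ C) :
    ∫ π, Φ (fun i : Fin k => π i.val, π k) ∂Pinf
      = ∫ π, ∫ θ, Φ (fun i : Fin k => π i.val, θ) ∂P ∂Pinf := by
  have hc : Measurable (fun π : ℕ → Θ => fun i : Fin k => π i.val) :=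
    measurable_pi_lambda _ (fun i => measurable_pi_apply _)
  have hek : Measurable (fun π : ℕ → Θ => π k) := measurable_pi_apply k
  have hiF : IndepFun (fun π : ℕ → Θ => fun i : Fin k => π i.val)
      (fun π : ℕ → Θ => π k) Pinf := by
    have h0 := h_indep.indepFun_finset (Finset.range k) {k}
      (by simp [Finset.disjoint_left]; omega) (fun i => measurable_pi_apply i)
    have hφm : Measurable (fun y : {x // x ∈ Finset.range k} → Θ =>
        fun i : Fin k => y ⟨i.val, by simp [i.isLt]⟩) :=
      measurable_pi_lambda _ (fun i => measurable_pi_apply _)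
    have hψm : Measurable (fun y : {x // x ∈ ({k} : Finset ℕ)} → Θ => y ⟨k, by simp⟩) :=
      measurable_pi_apply _
    exact h0.comp hφm hψm
  have hmap : Pinf.map (fun π : ℕ → Θ => (fun i : Fin k => π i.val, π k))
      = (Pinf.map (fun π : ℕ → Θ => fun i : Fin k => π i.val)).prod P := by
    rw [(indepFun_iff_map_prod_eq_prod_map_map hc.aemeasurable hek.aemeasurable).mp hiF,
      h_law k]
  have hprob : IsProbabilityMeasure (Pinf.map (fun π : ℕ → Θ => fun i : Fin k => π i.val)) :=
    Measure.isProbabilityMeasure_map hc.aemeasurable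
  have hint : Integrable Φ ((Pinf.map (fun π : ℕ → Θ => fun i : Fin k => π i.val)).prod P) :=
    (integrable_const C).mono' hΦ.aestronglyMeasurable
      (Filter.Eventually.of_forall (fun z => by simpa using hC z))
  have hmeasI : StronglyMeasurable (fun y : Fin k → Θ => ∫ θ, Φ (y, θ) ∂P) :=
    hΦ.stronglyMeasurable.integral_prod_right'
  calc ∫ π, Φ (fun i : Fin k => π i.val, π k) ∂Pinf
      = ∫ z, Φ z ∂(Pinf.map (fun π : ℕ → Θ => (fun i : Fin k => π i.val, π k))) :=
        (integral_map (hc.prodMk hek).aemeasurable hΦ.aestronglyMeasurable).symm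
    _ = ∫ z, Φ z ∂((Pinf.map (fun π : ℕ → Θ => fun i : Fin k => π i.val)).prod P) := by
        rw [hmap]
    _ = ∫ y, ∫ θ, Φ (y, θ) ∂P ∂(Pinf.map (fun π : ℕ → Θ => fun i : Fin k => π i.val)) :=
        integral_prod Φ hint
    _ = ∫ π, ∫ θ, Φ (fun i : Fin k => π i.val, θ) ∂P ∂Pinf :=
        integral_map hc.aemeasurable hmeasI.aestronglyMeasurable

def trajFin {n : ℕ} {Θ : Type*} (f : (Fin n → ℝ) → Θ → (Fin n → ℝ))
    (x₀ : Fin n → ℝ) : (k : ℕ) → (Fin k → Θ) → (Fin n → ℝ)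
  | 0, _ => x₀
  | k + 1, y => f (trajFin f x₀ k (fun i => y i.castSucc)) (y (Fin.last k))

lemma traj_eq_trajFin {n : ℕ} {Θ : Type*} (f : (Fin n → ℝ) → Θ → (Fin n → ℝ))
    (x₀ : Fin n → ℝ) (π : ℕ → Θ) : ∀ k, traj f x₀ π k = trajFin f x₀ k (fun i => π i.val)
  | 0 => rfl
  | k + 1 => by
      show f (traj f x₀ π k) (π k) = _
      rw [traj_eq_trajFin f x₀ π k]
      rfl

lemma measurable_trajFin {n : ℕ} {Θ : Type*} [MeasurableSpace Θ]
    {f : (Fin n → ℝ) → Θ → (Fin n → ℝ)}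
    (hf : Measurable (fun p : (Fin n → ℝ) × Θ => f p.1 p.2)) (x₀ : Fin n → ℝ) :
    ∀ k, Measurable (trajFin f x₀ k)
  | 0 => measurable_const
  | k + 1 => by
      have ih := measurable_trajFin hf x₀ k
      exact hf.comp (((ih.comp (measurable_pi_lambda _
        (fun i => measurable_pi_apply _)))).prodMk (measurable_pi_apply _))

lemma measurable_traj {n : ℕ} {Θ : Type*} [MeasurableSpace Θ]
    {f : (Fin n → ℝ) → Θ → (Fin n → ℝ)}
    (hf : Measurable (fun p : (Fin n → ℝ) × Θ => f p.1 p.2)) (x₀ : Fin n → ℝ) :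
    ∀ k, Measurable (fun π : ℕ → Θ => traj f x₀ π k)
  | 0 => measurable_const
  | k + 1 => by
      have ih := measurable_traj hf x₀ k
      exact hf.comp (ih.prodMk (measurable_pi_apply _))

set_option maxHeartbeats 2000000 in
/-- Barrier-like condition with a bounded auxiliary function (Theorem 2 of
Xue et al. 2024, case `α > 1`): upper bound on the finite-time safety probability. -/
theorem finite_time_safety_upper_bound_bounded_fn
    {n : ℕ} {Θ : Type*} [MeasurableSpace Θ]
    (P : Measure Θ) [IsProbabilityMeasure P]
    -- `Pinf` is the i.i.d. product measure `P^∞` on disturbance signals: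
    (Pinf : Measure (ℕ → Θ)) [IsProbabilityMeasure Pinf]
    (h_indep : iIndepFun (m := fun _ : ℕ => ‹MeasurableSpace Θ›) (fun i (π : ℕ → Θ) => π i) Pinf)
    (h_law : ∀ i : ℕ, Pinf.map (fun π : ℕ → Θ => π i) = P)
    (f : (Fin n → ℝ) → Θ → (Fin n → ℝ))
    (hf : Measurable (fun p : (Fin n → ℝ) × Θ => f p.1 p.2))
    (X Xt : Set (Fin n → ℝ)) (hX : MeasurableSet X) (hXt : MeasurableSet Xt)
    (hXsub : X ⊆ Xt)
    (hreach : ∀ x ∈ X, ∀ θ : Θ, f x θ ∈ Xt)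
    (N : ℕ)
    (v : (Fin n → ℝ) → ℝ) (hv : Measurable v)
    (hint : ∀ x ∈ X, Integrable (fun θ => v (f x θ)) P)
    (M α β : ℝ) (hα : 1 < α) (hβ : 1 - α < β)
    (h1 : ∀ x ∈ Xt, v x ≤ M)
    (h2 : ∀ x ∈ X, β + α * v x ≤ ∫ θ, v (f x θ) ∂P)
    (h3 : ∀ x ∈ Xt \ X, v x ≤ 1)
    (x₀ : Fin n → ℝ) (hx₀ : x₀ ∈ X) :
    (Pinf {π : ℕ → Θ | ∀ k ≤ N, traj f x₀ π k ∈ X}).toReal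
      ≤ 1 - ((α ^ (N + 1) * v x₀ - M) * (α - 1) + β * (α ^ (N + 1) - 1))
            / ((α + β - 1) * (α ^ (N + 1) - 1)) := by
  classical
  have hα0 : (0:ℝ) < α - 1 := by linarith
  -- truncated auxiliary function
  set C : ℝ := max M 1 with hC_def
  set L : ℝ := max (β / (α - 1)) (max (-M) 1) with hL_def
  set w : (Fin n → ℝ) → ℝ := fun x => max (min (v x) C) (-L) with hw_def
  have hL1 : (1:ℝ) ≤ L := le_trans (le_max_right _ _) (le_max_right _ _)
  have hLM : -M ≤ L := le_trans (le_max_left _ _) (le_max_right _ _)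
  have hβL : β ≤ (α - 1) * L := by
    have := le_max_left (β / (α - 1)) (max (-M) 1)
    rw [div_le_iff₀ hα0] at this
    linarith [this]
  set C₀ : ℝ := max C L with hC₀_def
  have hC0 : (0:ℝ) ≤ C₀ := le_trans (by linarith) (le_max_right C L)
  have hwbd : ∀ x, |w x| ≤ C₀ := by
    intro x
    have hLC : L ≤ C₀ := le_max_right C L
    have hCC : C ≤ C₀ := le_max_left C L
    rw [abs_le]
    constructor
    · have h1' : -L ≤ w x := le_max_right _ _
      linarith
    · exact max_le (le_trans (min_le_right _ _) hCC) (by linarith)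
  have hw_meas : Measurable w := (hv.min measurable_const).max measurable_const
  have hwMt : ∀ x ∈ Xt, w x ≤ M := by
    intro x hx
    apply max_le (le_trans (min_le_left _ _) (h1 x hx)) (by linarith)
  have hw1t : ∀ x ∈ Xt \ X, w x ≤ 1 := by
    intro x hx
    apply max_le (le_trans (min_le_left _ _) (h3 x hx)) (by linarith)
  have hwv : ∀ x ∈ Xt, v x ≤ w x := by
    intro x hx
    have hvC : v x ≤ C := le_trans (h1 x hx) (le_max_left _ _)
    exact le_trans (le_of_eq (min_eq_left hvC).symm) (le_max_left _ _)
  have hIw : ∀ x, Integrable (fun θ => w (f x θ)) P := by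
    intro x
    refine (integrable_const C₀).mono'
      ((hw_meas.comp (hf.comp measurable_prodMk_left)).aestronglyMeasurable)
      (Filter.Eventually.of_forall (fun θ => by simpa using hwbd (f x θ)))
  have hw2 : ∀ x ∈ X, β + α * w x ≤ ∫ θ, w (f x θ) ∂P := by
    intro x hx
    have hfx : ∀ θ, f x θ ∈ Xt := hreach x hx
    have hI1 : ∫ θ, v (f x θ) ∂P ≤ ∫ θ, w (f x θ) ∂P :=
      integral_mono (hint x hx) (hIw x) (fun θ => hwv _ (hfx θ))
    have hI2 : -L ≤ ∫ θ, w (f x θ) ∂P := by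
      have : ∫ θ, (-L : ℝ) ∂P ≤ ∫ θ, w (f x θ) ∂P :=
        integral_mono (integrable_const _) (hIw x) (fun θ => le_max_right _ _)
      simpa using this
    have hvC : v x ≤ C := le_trans (h1 x (hXsub hx)) (le_max_left _ _)
    rcases le_total (-L) (v x) with h | h
    · have hwx : w x = v x := by
        rw [hw_def]; simp only []
        rw [min_eq_left hvC, max_eq_left h]
      rw [hwx]
      exact le_trans (h2 x hx) hI1
    · have hwx : w x = -L := by
        rw [hw_def]; simp only []
        rw [max_eq_right (le_trans (min_le_left _ _) h)]
      rw [hwx]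
      nlinarith [hI2, hβL, hα0]
  have hwx₀ : v x₀ ≤ w x₀ := hwv x₀ (hXsub hx₀)
  -- the safe events
  set T : ℕ → (ℕ → Θ) → (Fin n → ℝ) := fun k π => traj f x₀ π k with hT_def
  set A : ℕ → Set (ℕ → Θ) := fun k => {π | ∀ j ≤ k, traj f x₀ π j ∈ X} with hA_def
  have hT : ∀ k, Measurable (T k) := measurable_traj hf x₀
  have hA : ∀ k, MeasurableSet (A k) := by
    intro k
    have hAeq : A k = ⋂ j, ⋂ _h : j ≤ k, (fun π => traj f x₀ π j) ⁻¹' X := by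
      ext π; simp [hA_def, Set.mem_iInter]
    rw [hAeq]
    exact MeasurableSet.iInter fun j => MeasurableSet.iInter fun _h =>
      (measurable_traj hf x₀ j) hX
  set p : ℕ → ℝ := fun k => (Pinf (A k)).toReal with hp_def
  have hp0 : p 0 = 1 := by
    have hA0 : A 0 = Set.univ := by
      ext π
      simp only [hA_def, Set.mem_setOf_eq, Set.mem_univ, iff_true]
      intro j hj
      cases Nat.le_zero.mp hj
      exact hx₀
    simp [hp_def, hA0]
  have hAsub : ∀ j k, j ≤ k → A k ⊆ A j := by
    intro j k hjk π hπ i hi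
    exact hπ i (le_trans hi hjk)
  have hpmono : ∀ j k, j ≤ k → p k ≤ p j := by
    intro j k hjk
    exact ENNReal.toReal_mono (measure_ne_top _ _) (measure_mono (hAsub j k hjk))
  have hp_nonneg : ∀ k, 0 ≤ p k := fun k => ENNReal.toReal_nonneg
  have hp_le_one : ∀ k, p k ≤ 1 := by
    intro k
    simpa using ENNReal.toReal_mono ENNReal.one_ne_top (prob_le_one (μ := Pinf) (s := A k))
  -- integrability helpers
  have hIbdd : ∀ (F : (ℕ → Θ) → ℝ), Measurable F → (∀ a, |F a| ≤ C₀) → Integrable F Pinf :=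
    fun F hF hb => (integrable_const C₀).mono' hF.aestronglyMeasurable
      (Filter.Eventually.of_forall (fun a => by simpa using hb a))
  have hIwT : ∀ k, Integrable (fun π => w (T k π)) Pinf :=
    fun k => hIbdd _ (hw_meas.comp (hT k)) (fun a => hwbd _)
  set g : (Fin n → ℝ) → ℝ := fun x => ∫ θ, w (f x θ) ∂P with hg_def
  have hg_meas : Measurable g :=
    ((hw_meas.comp hf).stronglyMeasurable.integral_prod_right').measurable
  have hgbd : ∀ x, |g x| ≤ C₀ := by
    intro x
    calc |g x| ≤ ∫ θ, |w (f x θ)| ∂P := by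
          simpa [Real.norm_eq_abs, hg_def] using
            norm_integral_le_integral_norm (f := fun θ => w (f x θ)) (μ := P)
    _ ≤ ∫ θ, C₀ ∂P := integral_mono (hIw x).abs (integrable_const _) (fun θ => hwbd _)
    _ = C₀ := by simp
  have hIgT : ∀ k, Integrable (fun π => g (T k π)) Pinf :=
    fun k => hIbdd _ (hg_meas.comp (hT k)) (fun a => hgbd _)
  -- Step A : conditional expectation identity via independence
  have stepA : ∀ k, ∫ π in A k, w (T (k+1) π) ∂Pinf = ∫ π in A k, g (T k π) ∂Pinf := by
    intro k
    set SS : Set (Fin k → Θ) :=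
      {y | ∀ j, ∀ h : j ≤ k, trajFin f x₀ j (fun i => y (Fin.castLE h i)) ∈ X} with hSS_def
    have hSSm : MeasurableSet SS := by
      have : SS = ⋂ j, ⋂ h : j ≤ k,
          (fun y : Fin k → Θ => trajFin f x₀ j (fun i => y (Fin.castLE h i))) ⁻¹' X := by
        ext y; simp [hSS_def, Set.mem_iInter]
      rw [this]
      exact MeasurableSet.iInter fun j => MeasurableSet.iInter fun h =>
        ((measurable_trajFin hf x₀ j).comp
          (measurable_pi_lambda _ fun i => measurable_pi_apply _)) hX
    have hmem : ∀ π : ℕ → Θ, ((fun i : Fin k => π i.val) ∈ SS ↔ π ∈ A k) := by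
      intro π
      constructor
      · intro h j hj
        rw [traj_eq_trajFin]
        exact h j hj
      · intro h j hj
        have := h j hj
        rwa [traj_eq_trajFin] at this
    set Φ : (Fin k → Θ) × Θ → ℝ := fun z =>
      (SS ×ˢ (Set.univ : Set Θ)).indicator (fun z => w (f (trajFin f x₀ k z.1) z.2)) z
      with hΦ_def
    have hΦm : Measurable Φ :=
      (hw_meas.comp (hf.comp (((measurable_trajFin hf x₀ k).comp measurable_fst).prodMk
        measurable_snd))).indicator (hSSm.prod MeasurableSet.univ)
    have hΦbd : ∀ z, |Φ z| ≤ C₀ := by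
      intro z
      rw [hΦ_def]
      by_cases hz : z ∈ SS ×ˢ (Set.univ : Set Θ)
      · simp only [Set.indicator_of_mem hz]
        exact hwbd _
      · simp [Set.indicator_of_notMem hz, hC0]
    have key := cylinder_integral P Pinf h_indep h_law k Φ hΦm C₀ hΦbd
    have hT1 : ∀ π : ℕ → Θ, T (k+1) π = f (trajFin f x₀ k (fun i : Fin k => π i.val)) (π k) := by
      intro π
      show traj f x₀ π (k+1) = _
      rw [traj_eq_trajFin f x₀ π (k+1)]
      rfl
    have hLHS : (fun π : ℕ → Θ => Φ (fun i : Fin k => π i.val, π k))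
        = (A k).indicator (fun π => w (T (k+1) π)) := by
      funext π
      by_cases hπ : π ∈ A k
      · have hy : ((fun i : Fin k => π i.val), π k) ∈ SS ×ˢ (Set.univ : Set Θ) :=
          ⟨(hmem π).2 hπ, trivial⟩
        rw [hΦ_def]
        simp only [Set.indicator_of_mem hy, Set.indicator_of_mem hπ]
        rw [hT1 π]
      · have hy : ¬ ((fun i : Fin k => π i.val), π k) ∈ SS ×ˢ (Set.univ : Set Θ) := by
          intro hcon
          exact hπ ((hmem π).1 hcon.1)
        rw [hΦ_def]
        simp only [Set.indicator_of_notMem hy, Set.indicator_of_notMem hπ]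
    have hRHS : (fun π : ℕ → Θ => ∫ θ, Φ (fun i : Fin k => π i.val, θ) ∂P)
        = (A k).indicator (fun π => g (T k π)) := by
      funext π
      by_cases hπ : π ∈ A k
      · have hy : ∀ θ : Θ, ((fun i : Fin k => π i.val), θ) ∈ SS ×ˢ (Set.univ : Set Θ) :=
          fun θ => ⟨(hmem π).2 hπ, trivial⟩
        rw [Set.indicator_of_mem hπ]
        have : (fun θ => Φ (fun i : Fin k => π i.val, θ))
            = fun θ => w (f (trajFin f x₀ k (fun i : Fin k => π i.val)) θ) := by
          funext θ
          rw [hΦ_def]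
          simp only [Set.indicator_of_mem (hy θ)]
        rw [this]
        have hTk : T k π = trajFin f x₀ k (fun i : Fin k => π i.val) := traj_eq_trajFin f x₀ π k
        rw [hg_def, hTk]
      · have hy : ∀ θ : Θ, ¬ ((fun i : Fin k => π i.val), θ) ∈ SS ×ˢ (Set.univ : Set Θ) :=
          fun θ hcon => hπ ((hmem π).1 hcon.1)
        rw [Set.indicator_of_notMem hπ]
        have : (fun θ => Φ (fun i : Fin k => π i.val, θ)) = fun _ => (0:ℝ) := by
          funext θ
          rw [hΦ_def]
          simp only [Set.indicator_of_notMem (hy θ)]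
        rw [this]
        simp
    rw [hLHS, hRHS] at key
    rw [integral_indicator (hA k), integral_indicator (hA k)] at key
    exact key
  -- Step A' : the drift inequality on the safe event
  have stepA2 : ∀ k, β * p k + α * ∫ π in A k, w (T k π) ∂Pinf
      ≤ ∫ π in A k, w (T (k+1) π) ∂Pinf := by
    intro k
    rw [stepA k]
    have hmono : ∫ π in A k, (β + α * w (T k π)) ∂Pinf ≤ ∫ π in A k, g (T k π) ∂Pinf := by
      apply setIntegral_mono_on
        (((integrable_const β).add ((hIwT k).const_mul α)).integrableOn)
        ((hIgT k).integrableOn) (hA k)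
      intro π hπ
      exact hw2 (T k π) (hπ k le_rfl)
    have heq : ∫ π in A k, (β + α * w (T k π)) ∂Pinf
        = β * p k + α * ∫ π in A k, w (T k π) ∂Pinf := by
      rw [integral_add (integrable_const β).integrableOn ((hIwT k).const_mul α).integrableOn]
      rw [setIntegral_const, integral_const_mul]
      simp [hp_def, smul_eq_mul, mul_comm, measureReal_def]
    linarith
  -- some abbreviations
  set u : ℕ → ℝ := fun k => ∫ π in A k, w (T k π) ∂Pinf with hu_def
  set m : ℝ := min M 1 with hm_def
  -- Step B : exit bound
  have stepB : ∀ k, ∫ π in A k, w (T (k+1) π) ∂Pinf - m * (p k - p (k+1)) ≤ u (k+1) := by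
    intro k
    have hsub : A (k+1) ⊆ A k := hAsub k (k+1) (Nat.le_succ k)
    have hunion : A (k+1) ∪ (A k \ A (k+1)) = A k := Set.union_diff_cancel hsub
    have hdisj : Disjoint (A (k+1)) (A k \ A (k+1)) := Set.disjoint_sdiff_right
    have hsplit : ∫ π in A k, w (T (k+1) π) ∂Pinf
        = (∫ π in A (k+1), w (T (k+1) π) ∂Pinf)
          + ∫ π in A k \ A (k+1), w (T (k+1) π) ∂Pinf := by
      have := setIntegral_union (f := fun π => w (T (k+1) π)) (μ := Pinf) hdisj
        ((hA k).diff (hA (k+1))) (hIwT (k+1)).integrableOn (hIwT (k+1)).integrableOn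
      rwa [hunion] at this
    have hdiffmem : ∀ π ∈ A k \ A (k+1), T (k+1) π ∈ Xt \ X := by
      intro π hπ
      obtain ⟨hπk, hπk1⟩ := hπ
      constructor
      · exact hreach _ (hπk k le_rfl) _
      · intro hcon
        apply hπk1
        intro j hj
        rcases Nat.lt_or_ge j (k+1) with hj' | hj'
        · exact hπk j (Nat.lt_succ_iff.mp hj')
        · have : j = k + 1 := le_antisymm hj hj'
          rw [this]; exact hcon
    have hbound : ∫ π in A k \ A (k+1), w (T (k+1) π) ∂Pinf
        ≤ m * (p k - p (k+1)) := by
      have h1' : ∫ π in A k \ A (k+1), w (T (k+1) π) ∂Pinf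
          ≤ ∫ _π in A k \ A (k+1), m ∂Pinf := by
        apply setIntegral_mono_on (hIwT (k+1)).integrableOn
          (integrable_const m).integrableOn ((hA k).diff (hA (k+1)))
        intro π hπ
        have := hdiffmem π hπ
        exact le_min (hwMt _ this.1) (hw1t _ this)
      have h2' : ∫ _π in A k \ A (k+1), m ∂Pinf = m * (p k - p (k+1)) := by
        rw [setIntegral_const, measureReal_def]
        have hmeq : Pinf (A k \ A (k+1)) = Pinf (A k) - Pinf (A (k+1)) :=
          measure_diff hsub (hA (k+1)).nullMeasurableSet (measure_ne_top _ _)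
        rw [hmeq, ENNReal.toReal_sub_of_le (measure_mono hsub) (measure_ne_top _ _)]
        simp [hp_def, smul_eq_mul, mul_comm]
      linarith
    rw [hu_def]
    simp only []
    linarith [hsplit, hbound]
  -- the recursion for r k = u k - m * p k
  set cm : ℝ := β + (α - 1) * m with hcm_def
  have hrec : ∀ k, α * (u k - m * p k) + cm * p k ≤ u (k+1) - m * p (k+1) := by
    intro k
    have h1' := stepA2 k
    have h2' := stepB k
    rw [hcm_def]
    linarith [h1', h2']
  have hpow1 : (1:ℝ) < α ^ (N + 1) := one_lt_pow₀ hα (Nat.succ_ne_zero N)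
  have hden : (0:ℝ) < (α + β - 1) * (α ^ (N + 1) - 1) := by
    have : (0:ℝ) < α + β - 1 := by linarith
    nlinarith
  have hLHSeq : (Pinf {π : ℕ → Θ | ∀ k ≤ N, traj f x₀ π k ∈ X}).toReal = p N := rfl
  rw [hLHSeq]
  have hq0 : 0 ≤ p N := hp_nonneg N
  have hq1 : p N ≤ 1 := hp_le_one N
  have hA1pos : (0:ℝ) < α ^ (N + 1) := by positivity
  rcases le_or_gt cm 0 with hcm | hcm
  · -- numerator nonpositive, so the bound is ≥ 1 and the claim is trivial
    have hvM : v x₀ ≤ M := h1 x₀ (hXsub hx₀)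
    have hnum : (α ^ (N + 1) * v x₀ - M) * (α - 1) + β * (α ^ (N + 1) - 1) ≤ 0 := by
      have hMm : m = M := by
        rcases le_total M 1 with h | h
        · simp [hm_def, h]
        · exfalso
          have hm1 : m = 1 := min_eq_right h
          rw [hcm_def, hm1] at hcm
          nlinarith
      have h3' : β + (α - 1) * M ≤ 0 := by
        rw [hcm_def, hMm] at hcm; linarith
      have hmul : α ^ (N + 1) * v x₀ ≤ α ^ (N + 1) * M :=
        mul_le_mul_of_nonneg_left hvM hA1pos.le
      nlinarith [hmul, hpow1, hα0, h3']
    have hfrac : 0 ≤ -((α ^ (N + 1) * v x₀ - M) * (α - 1) + β * (α ^ (N + 1) - 1))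
        / ((α + β - 1) * (α ^ (N + 1) - 1)) :=
      div_nonneg (by linarith) (le_of_lt hden)
    have heq : 1 - ((α ^ (N + 1) * v x₀ - M) * (α - 1) + β * (α ^ (N + 1) - 1))
          / ((α + β - 1) * (α ^ (N + 1) - 1))
        = 1 + -((α ^ (N + 1) * v x₀ - M) * (α - 1) + β * (α ^ (N + 1) - 1))
          / ((α + β - 1) * (α ^ (N + 1) - 1)) := by ring
    rw [heq]
    linarith
  · -- main case
    set κ : ℝ := cm * p N / (α - 1) with hκ_def
    have hκα : α * κ - κ = cm * p N := by
      rw [hκ_def]; field_simp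
    have hind : ∀ k, k ≤ N → α ^ k * (u 0 - m * p 0 + κ) ≤ u k - m * p k + κ := by
      intro k
      induction k with
      | zero => intro _; simp
      | succ k ih =>
        intro hk
        have hk' : k ≤ N := Nat.le_of_succ_le hk
        have ih' := ih hk'
        have hpq : p N ≤ p k := hpmono k N hk'
        have hstep : α * (u k - m * p k + κ) ≤ u (k+1) - m * p (k+1) + κ := by
          have hcmq : cm * p N ≤ cm * p k := mul_le_mul_of_nonneg_left hpq (le_of_lt hcm)
          have := hrec k
          linarith [hκα]
        calc α ^ (k+1) * (u 0 - m * p 0 + κ) = α * (α ^ k * (u 0 - m * p 0 + κ)) := by ring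
        _ ≤ α * (u k - m * p k + κ) := mul_le_mul_of_nonneg_left ih' (by linarith)
        _ ≤ u (k+1) - m * p (k+1) + κ := hstep
    have hu0 : u 0 = w x₀ := by
      have hA0 : A 0 = Set.univ := by
        ext π
        simp only [hA_def, Set.mem_setOf_eq, Set.mem_univ, iff_true]
        intro j hj
        cases Nat.le_zero.mp hj
        exact hx₀
      rw [hu_def]
      simp only [hA0, Measure.restrict_univ]
      have : (fun π => w (T 0 π)) = fun _ => w x₀ := rfl
      rw [this, integral_const]
      simp
    have hfinal : ∫ π in A N, w (T (N+1) π) ∂Pinf ≤ M * p N := by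
      have h1' : ∫ π in A N, w (T (N+1) π) ∂Pinf ≤ ∫ _π in A N, M ∂Pinf := by
        apply setIntegral_mono_on (hIwT (N+1)).integrableOn
          (integrable_const M).integrableOn (hA N)
        intro π hπ
        exact hwMt _ (hreach _ (hπ N le_rfl) _)
      rw [setIntegral_const] at h1'
      simpa [hp_def, smul_eq_mul, mul_comm, measureReal_def] using h1'
    have hchain : β * p N + α * (α ^ N * (w x₀ - m + κ) - κ + m * p N) ≤ M * p N := by
      have hA2 := stepA2 N
      have hindN := hind N le_rfl
      rw [hu0, hp0] at hindN
      have hαpos : (0:ℝ) ≤ α := by linarith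
      have hmul := mul_le_mul_of_nonneg_left hindN hαpos
      have hmone : w x₀ - m * 1 + κ = w x₀ - m + κ := by ring
      rw [hmone] at hindN hmul
      linarith [hA2, hfinal, hmul]
    -- now pure algebra
    have hw₀M : w x₀ ≤ M := hwMt x₀ (hXsub hx₀)
    have hA1N : α ^ N * α = α ^ (N + 1) := by ring
    have hκq : κ * (α - 1) = cm * p N := by
      rw [hκ_def]; field_simp
    have hkey : p N * (cm * α ^ (N + 1) - M * (α - 1) - β)
        ≤ (α - 1) * α ^ (N + 1) * (m - w x₀) := by
      have e0 := mul_le_mul_of_nonneg_right hchain hα0.le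
      have e1 : (α * (α ^ N * (w x₀ - m + κ))) * (α - 1)
          = (α - 1) * α ^ (N + 1) * (w x₀ - m) + α ^ (N + 1) * (cm * p N) := by
        rw [← hκq]; ring
      have e2 : (α * κ) * (α - 1) = α * (cm * p N) := by rw [← hκq]; ring
      have e3 : α * (cm * p N) = α * β * p N + α * (α - 1) * (m * p N) := by
        rw [hcm_def]; ring
      linarith [e0, e1, e2, e3]
    have hΔ : 0 ≤ (α - 1) * (α ^ (N + 1) * (1 - m) + M - 1) := by
      rcases le_total 1 M with h | h
      · have hm1 : m = 1 := min_eq_right h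
        rw [hm1]
        nlinarith
      · have hmM : m = M := min_eq_left h
        rw [hmM]
        have h9 : 0 ≤ (α ^ (N + 1) - 1) * (1 - M) :=
          mul_nonneg (by linarith [hpow1]) (by linarith)
        nlinarith [h9]
    have hgoal2 : p N * ((α + β - 1) * (α ^ (N + 1) - 1))
        ≤ (α - 1) * (α ^ (N + 1) * (1 - v x₀) + M - 1) := by
      have hsplit : (α + β - 1) * (α ^ (N + 1) - 1)
          = (cm * α ^ (N + 1) - M * (α - 1) - β)
            + (α - 1) * (α ^ (N + 1) * (1 - m) + M - 1) := by
        rw [hcm_def]; ring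
      have hqΔ : p N * ((α - 1) * (α ^ (N + 1) * (1 - m) + M - 1))
          ≤ (α - 1) * (α ^ (N + 1) * (1 - m) + M - 1) := by
        nlinarith [hΔ, hq1, hq0]
      have hvw : (α - 1) * α ^ (N + 1) * (m - w x₀)
            + (α - 1) * (α ^ (N + 1) * (1 - m) + M - 1)
          ≤ (α - 1) * (α ^ (N + 1) * (1 - v x₀) + M - 1) := by
        have : α ^ (N + 1) * v x₀ ≤ α ^ (N + 1) * w x₀ :=
          mul_le_mul_of_nonneg_left hwx₀ hA1pos.le
        nlinarith [this, hα0]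
      calc p N * ((α + β - 1) * (α ^ (N + 1) - 1))
          = p N * (cm * α ^ (N + 1) - M * (α - 1) - β)
            + p N * ((α - 1) * (α ^ (N + 1) * (1 - m) + M - 1)) := by
            rw [hsplit]; ring
        _ ≤ (α - 1) * α ^ (N + 1) * (m - w x₀)
            + (α - 1) * (α ^ (N + 1) * (1 - m) + M - 1) := by
            linarith [hkey, hqΔ]
        _ ≤ (α - 1) * (α ^ (N + 1) * (1 - v x₀) + M - 1) := hvw
    have hdeneq : 1 - ((α ^ (N + 1) * v x₀ - M) * (α - 1) + β * (α ^ (N + 1) - 1))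
          / ((α + β - 1) * (α ^ (N + 1) - 1))
        = ((α - 1) * (α ^ (N + 1) * (1 - v x₀) + M - 1))
          / ((α + β - 1) * (α ^ (N + 1) - 1)) := by
      rw [eq_div_iff (ne_of_gt hden)]
      rw [sub_mul, div_mul_cancel₀ _ (ne_of_gt hden)]
      ring
    rw [hdeneq, le_div_iff₀ hden]
    linarith [hgoal2]
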